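/- arXiv:2108.02655 — 5 statements merged into one kernel-verified Lean document; each statement's English description precedes it below -/
import Mathlib

section
/- Every finite simple graph G on n ≥ 1 vertices admits a high-degree sinkless orientation: there exists an orientation of the edges of G such that every vertex of degree at least ⌊log₂ n⌋ + 1 has at least one outgoing edge. -/
/-- **High-degree sinkless orientation exists.** Every finite simple graph on
`n ≥ 1` vertices admits an orientation of its edges such that every vertex of
degree at least `⌊log₂ n⌋ + 1` has at least one outgoing edge. Here
`Nat.log 2 n` is the floor of the base-2 logarithm of `n`. -/
theorem high_degree_sinkless_orientation_exists {V : Type} [Fintype V] [DecidableEq V]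
    (G : SimpleGraph V) [DecidableRel G.Adj] (hn : 1 ≤ Fintype.card V) :
    ∃ head : Sym2 V → V,
      (∀ e ∈ G.edgeSet, head e ∈ e) ∧
      (∀ v : V, Nat.log 2 (Fintype.card V) + 1 ≤ G.degree v →
        ∃ e ∈ G.edgeSet, v ∈ e ∧ head e ≠ v) := by
  classical
  set k := Nat.log 2 (Fintype.card V) + 1 with hk
  -- every constrained vertex has degree ≥ 2
  have hdeg2 : ∀ v : V, k ≤ G.degree v → 2 ≤ G.degree v := by
    intro v hv
    rcases eq_or_lt_of_le hn with h1 | h2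
    · exfalso
      have := G.degree_lt_card_verts v
      rw [← h1] at this
      omega
    · have : 0 < Nat.log 2 (Fintype.card V) := Nat.log_pos (by norm_num) h2
      omega
  set High := {v : V // k ≤ G.degree v} with hHigh
  let t : High → Finset (Sym2 V) := fun v => G.incidenceFinset v.1
  have htcard : ∀ i : High, 2 ≤ (t i).card := by
    intro i
    rw [SimpleGraph.card_incidenceFinset_eq_degree]
    exact hdeg2 i.1 i.2
  -- Hall's condition
  have hall : ∀ s : Finset High, s.card ≤ (s.biUnion t).card := by
    intro s
    set T := s.biUnion t with hT
    have key : 2 * s.card ≤ 2 * T.card := by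
      calc 2 * s.card = ∑ _i ∈ s, 2 := by rw [Finset.sum_const, smul_eq_mul, mul_comm]
        _ ≤ ∑ i ∈ s, (t i).card := Finset.sum_le_sum fun i _ => htcard i
        _ = ∑ i ∈ s, ∑ e ∈ T, (if e ∈ t i then 1 else 0) := by
            refine Finset.sum_congr rfl fun i hi => ?_
            rw [← Finset.card_filter]
            congr 1
            rw [Finset.filter_mem_eq_inter]
            exact (Finset.inter_eq_right.mpr (Finset.subset_biUnion_of_mem t hi)).symm
        _ = ∑ e ∈ T, ∑ i ∈ s, (if e ∈ t i then 1 else 0) := Finset.sum_comm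
        _ ≤ ∑ _e ∈ T, 2 := by
            refine Finset.sum_le_sum fun e _he => ?_
            rw [← Finset.card_filter]
            -- each edge is incident to at most 2 vertices
            induction e using Sym2.ind with
            | _ a b =>
              calc (s.filter fun i => s(a, b) ∈ t i).card
                  ≤ ({a, b} : Finset V).card := by
                    apply Finset.card_le_card_of_injOn (fun i => i.1)
                    · intro i hi
                      rw [Finset.mem_coe, Finset.mem_filter] at hi
                      have hm : (i.1 : V) ∈ s(a, b) :=
                        ((G.mem_incidenceFinset _ _).1 hi.2).2
                      rw [Sym2.mem_iff] at hm
                      simpa [Finset.mem_insert] using hm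
                    · intro i _ j _ hij
                      exact Subtype.ext hij
                _ ≤ 2 := Finset.card_insert_le _ _ |>.trans (by simp)
        _ = 2 * T.card := by rw [Finset.sum_const, smul_eq_mul, mul_comm]
    omega
  obtain ⟨f, hfinj, hf⟩ := (Finset.all_card_le_biUnion_card_iff_exists_injective t).mp hall
  have hfe : ∀ i : High, f i ∈ G.edgeSet ∧ (i.1 : V) ∈ f i := by
    intro i
    exact (G.mem_incidenceFinset _ _).1 (hf i)
  refine ⟨fun e =>
    if h : ∃ i, f i = e then
      Sym2.Mem.other (show ((h.choose : High) : V) ∈ e by have := (hfe h.choose).2; rwa [h.choose_spec] at this)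
    else e.out.1, ?_, ?_⟩
  · intro e he
    by_cases h : ∃ i, f i = e
    · simp only [dif_pos h]; exact Sym2.other_mem _
    · simp only [dif_neg h]; exact Sym2.out_fst_mem e
  · intro v hv
    set i : High := ⟨v, hv⟩ with hi
    refine ⟨f i, (hfe i).1, (hfe i).2, ?_⟩
    have hex : ∃ j, f j = f i := ⟨i, rfl⟩
    simp only [dif_pos hex]
    have h1 : ((hex.choose : High) : V) = v := congrArg Subtype.val (hfinj hex.choose_spec)
    exact h1 ▸ G.edge_other_ne (hfe i).1 _
end

section
/- Let G be a finite simple graph, v a vertex of G, and T ≥ 1 a natural number. Suppose that every vertex u reachable from v with dist_G(v,u) ≤ T − 1 has degree at least 3 in G, and that the subgraph of G induced on the set {u : u reachable from v, dist_G(v,u) ≤ T} contains no cycle. Then the number of vertices u reachable from v with dist_G(v,u) = T is at least 3 · 2^(T−1). -/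
open SimpleGraph

lemma walk_induce {V : Type} {G : SimpleGraph V} {s : Set V} {a b : V}
    (p : G.Walk a b) :
    ∀ (ha : a ∈ s) (hb : b ∈ s), (∀ x ∈ p.support, x ∈ s) →
    ∃ q : (G.induce s).Walk ⟨a, ha⟩ ⟨b, hb⟩, q.support.map Subtype.val = p.support := by
  induction p with
  | nil => intro ha hb _; exact ⟨.nil, by simp⟩
  | @cons u w c h p ih =>
    intro ha hb hp
    have hw : w ∈ s := hp w (by simp)
    obtain ⟨q, hq⟩ := ih hw hb (fun x hx => hp x (by simp [hx]))
    exact ⟨.cons (by exact h) q, by exact congrArg (List.cons u) hq⟩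

lemma path_support_unique {V : Type} {G : SimpleGraph V} {s : Set V}
    (hacyc : (G.induce s).IsAcyclic) {a b : V} (p q : G.Walk a b)
    (hp : p.IsPath) (hq : q.IsPath)
    (hps : ∀ x ∈ p.support, x ∈ s) (hqs : ∀ x ∈ q.support, x ∈ s) :
    p.support = q.support := by
  have ha : a ∈ s := hps a p.start_mem_support
  have hb : b ∈ s := hps b p.end_mem_support
  obtain ⟨p', hp'⟩ := walk_induce p ha hb hps
  obtain ⟨q', hq'⟩ := walk_induce q ha hb hqs
  have hp'path : p'.IsPath := by
    rw [Walk.isPath_def]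
    have : (p'.support.map Subtype.val).Nodup := hp' ▸ hp.support_nodup
    exact this.of_map _
  have hq'path : q'.IsPath := by
    rw [Walk.isPath_def]
    have : (q'.support.map Subtype.val).Nodup := hq' ▸ hq.support_nodup
    exact this.of_map _
  have : (⟨p', hp'path⟩ : (G.induce s).Path _ _) = ⟨q', hq'path⟩ :=
    isAcyclic_iff_path_unique.mp hacyc _ _
  have hpq : p' = q' := congrArg Subtype.val this
  rw [← hp', ← hq', hpq]

/-- key uniqueness lemma: two distinct neighbors of `u` at distance ≤ dist v u
within the ball of radius T would give two distinct paths, contradicting acyclicity. -/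
lemma key_unique {V : Type} [DecidableEq V] {G : SimpleGraph V} {T : ℕ} {v : V}
    (hacyc : (G.induce {u : V | G.Reachable v u ∧ G.dist v u ≤ T}).IsAcyclic)
    {u w1 w2 : V} (hu : G.Reachable v u) (huT : G.dist v u ≤ T)
    (h1 : G.Adj w1 u) (h2 : G.Adj w2 u)
    (hr1 : G.Reachable v w1) (hr2 : G.Reachable v w2)
    (hd1 : G.dist v w1 ≤ G.dist v u) (hd2 : G.dist v w2 ≤ G.dist v u) : w1 = w2 := by
  -- construct, for i = 1, 2, a path from v to u through wi
  have build : ∀ (w : V) (h : G.Adj w u), G.Reachable v w → G.dist v w ≤ G.dist v u →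
      ∃ c : G.Walk v u, c.IsPath ∧ (∀ x ∈ c.support, x ∈ {u : V | G.Reachable v u ∧ G.dist v u ≤ T})
        ∧ c.support.getLast (by simp) = u ∧ c.support.dropLast.getLast? = some w := by
    intro w h hr hd
    obtain ⟨p0, hp0⟩ := hr.exists_walk_length_eq_dist
    set q : G.Walk v w := p0.bypass with hqdef
    have hqpath : q.IsPath := p0.bypass_isPath
    have hqlen : q.length = G.dist v w := le_antisymm (hp0 ▸ p0.length_bypass_le) (G.dist_le q)
    have hsup : ∀ x ∈ q.support, G.Reachable v x ∧ G.dist v x ≤ G.dist v w := by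
      intro x hx
      refine ⟨⟨q.takeUntil x hx⟩, ?_⟩
      calc G.dist v x ≤ (q.takeUntil x hx).length := G.dist_le _
        _ ≤ q.length := q.length_takeUntil_le hx
        _ = G.dist v w := hqlen
    have hnu : u ∉ q.support := by
      intro hmem
      have hspec := q.take_spec hmem
      have hlen : (q.takeUntil u hmem).length + (q.dropUntil u hmem).length = q.length := by
        have := congrArg Walk.length hspec
        rwa [Walk.length_append] at this
      have hle : G.dist v u ≤ (q.takeUntil u hmem).length := G.dist_le _
      have : (q.dropUntil u hmem).length = 0 := by omega
      have := Walk.eq_of_length_eq_zero this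
      exact G.irrefl (this ▸ h)
    refine ⟨(Walk.cons h.symm q.reverse).reverse, ?_, ?_, ?_, ?_⟩
    · exact (hqpath.reverse.cons (by simpa using hnu)).reverse
    · intro x hx
      simp only [Walk.support_reverse, Walk.support_cons, List.reverse_cons,
        List.mem_append, List.mem_reverse, List.mem_singleton] at hx
      rcases hx with hx | rfl
      · exact ⟨(hsup x hx).1, le_trans (le_trans (hsup x hx).2 hd) huT⟩
      · exact ⟨hu, huT⟩
    · simp
    · have : (Walk.cons h.symm q.reverse).reverse.support = q.support ++ [u] := by
        simp [Walk.support_append]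
      rw [this, show q.support ++ [u] = q.support.concat u from List.concat_eq_append.symm]
      simp only [List.concat_eq_append, List.dropLast_concat]
      rw [List.getLast?_eq_getLast (List.ne_nil_of_mem q.start_mem_support), q.getLast_support]
  obtain ⟨c1, hc1p, hc1s, _, hc1l⟩ := build w1 h1 hr1 hd1
  obtain ⟨c2, hc2p, hc2s, _, hc2l⟩ := build w2 h2 hr2 hd2
  have := path_support_unique hacyc c1 c2 hc1p hc2p hc1s hc2s
  rw [this] at hc1l
  rw [hc1l] at hc2l
  exact (Option.some_inj.mp hc2l)

/-- Let `G` be a finite simple graph, `v` a vertex and `T ≥ 1`. If every vertex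
`u` reachable from `v` with `dist v u ≤ T - 1` has degree at least 3, and the
subgraph induced on `{u | reachable from v, dist v u ≤ T}` contains no cycle,
then there are at least `3 * 2 ^ (T - 1)` vertices `u` reachable from `v` with
`dist v u = T`. -/
theorem sphere_large_of_locally_tree_like {V : Type} [Fintype V] [DecidableEq V]
    (G : SimpleGraph V) [DecidableRel G.Adj] (v : V) (T : ℕ) (hT : 1 ≤ T)
    (hdeg : ∀ u : V, G.Reachable v u → G.dist v u ≤ T - 1 → 3 ≤ G.degree u)
    (hacyc : (G.induce {u : V | G.Reachable v u ∧ G.dist v u ≤ T}).IsAcyclic) :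
    3 * 2 ^ (T - 1) ≤ {u : V | G.Reachable v u ∧ G.dist v u = T}.ncard := by
  classical
  let S : ℕ → Finset V := fun k => Finset.univ.filter (fun u => G.Reachable v u ∧ G.dist v u = k)
  have hmemS : ∀ k u, u ∈ S k ↔ G.Reachable v u ∧ G.dist v u = k := by
    intro k u; simp [S]
  -- base case
  have hbase : 3 ≤ (S 1).card := by
    have hsub : G.neighborFinset v ⊆ S 1 := by
      intro w hw
      rw [SimpleGraph.mem_neighborFinset] at hw
      exact (hmemS 1 w).2 ⟨hw.reachable, SimpleGraph.dist_eq_one_iff_adj.mpr hw⟩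
    calc 3 ≤ G.degree v := hdeg v (Reachable.refl v) (by rw [SimpleGraph.dist_self]; omega)
      _ = (G.neighborFinset v).card := (G.card_neighborFinset_eq_degree v).symm
      _ ≤ (S 1).card := Finset.card_le_card hsub
  -- inductive step
  have hstep : ∀ k, 1 ≤ k → k + 1 ≤ T → 2 * (S k).card ≤ (S (k + 1)).card := by
    intro k hk1 hkT
    have hdisj : ∀ u1 ∈ S k, ∀ u2 ∈ S k, u1 ≠ u2 →
        Disjoint ((G.neighborFinset u1).filter (· ∈ S (k + 1)))
          ((G.neighborFinset u2).filter (· ∈ S (k + 1))) := by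
      intro u1 h1 u2 h2 hne
      rw [Finset.disjoint_left]
      intro w hw1 hw2
      simp only [Finset.mem_filter, SimpleGraph.mem_neighborFinset] at hw1 hw2
      obtain ⟨hur1, hud1⟩ := (hmemS _ u1).1 h1
      obtain ⟨hur2, hud2⟩ := (hmemS _ u2).1 h2
      obtain ⟨hwr, hwd⟩ := (hmemS _ w).1 hw1.2
      exact hne (key_unique hacyc hwr (by omega) hw1.1 hw2.1 hur1 hur2
        (by omega) (by omega))
    have htwo : ∀ u ∈ S k, 2 ≤ ((G.neighborFinset u).filter (· ∈ S (k + 1))).card := by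
      intro u hu
      obtain ⟨hur, hud⟩ := (hmemS _ u).1 hu
      have hdeg3 := hdeg u hur (by omega)
      set B := (G.neighborFinset u).filter (fun w => G.dist v w ≤ k) with hB
      have hB1 : B.card ≤ 1 := by
        rw [Finset.card_le_one]
        intro a ha b hb
        simp only [hB, Finset.mem_filter, SimpleGraph.mem_neighborFinset] at ha hb
        exact key_unique hacyc hur (by omega) ha.1.symm hb.1.symm
          (hur.trans ha.1.reachable) (hur.trans hb.1.reachable) (by omega) (by omega)
      have hsub : G.neighborFinset u \ B ⊆ (G.neighborFinset u).filter (· ∈ S (k + 1)) := by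
        intro w hw
        rw [Finset.mem_sdiff] at hw
        obtain ⟨hwn, hwb⟩ := hw
        rw [SimpleGraph.mem_neighborFinset] at hwn
        have hnr : G.Reachable v w := hur.trans hwn.reachable
        have hle : G.dist v w ≤ k + 1 := by
          obtain ⟨p, hp⟩ := hur.exists_walk_length_eq_dist
          have := G.dist_le (p.concat hwn)
          rw [SimpleGraph.Walk.length_concat, hp, hud] at this
          exact this
        have hgt : ¬ G.dist v w ≤ k := fun hcon =>
          hwb (by simp [hB, SimpleGraph.mem_neighborFinset, hwn, hcon])
        exact Finset.mem_filter.mpr ⟨(SimpleGraph.mem_neighborFinset _ _ _).mpr hwn,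
          (hmemS _ w).2 ⟨hnr, by omega⟩⟩
      have hdegcard : G.degree u = (G.neighborFinset u).card :=
        (G.card_neighborFinset_eq_degree u).symm
      calc 2 ≤ (G.neighborFinset u).card - B.card := by omega
        _ = (G.neighborFinset u \ B).card :=
            (Finset.card_sdiff_of_subset (Finset.filter_subset _ _)).symm
        _ ≤ _ := Finset.card_le_card hsub
    calc 2 * (S k).card = ∑ _u ∈ S k, 2 := by rw [Finset.sum_const, smul_eq_mul, mul_comm]
      _ ≤ ∑ u ∈ S k, ((G.neighborFinset u).filter (· ∈ S (k + 1))).card :=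
          Finset.sum_le_sum htwo
      _ = ((S k).biUnion (fun u => (G.neighborFinset u).filter (· ∈ S (k + 1)))).card :=
          (Finset.card_biUnion hdisj).symm
      _ ≤ (S (k + 1)).card := by
          refine Finset.card_le_card ?_
          intro w hw
          rw [Finset.mem_biUnion] at hw
          obtain ⟨u, _, hw⟩ := hw
          exact (Finset.mem_filter.1 hw).2
  -- induction
  have main : ∀ k, 1 ≤ k → k ≤ T → 3 * 2 ^ (k - 1) ≤ (S k).card := by
    intro k
    induction k with
    | zero => omega
    | succ n ih =>
      intro _ hkT
      rcases Nat.eq_zero_or_pos n with rfl | hn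
      · simpa using hbase
      · have h1 := ih hn (by omega)
        have h2 := hstep n hn hkT
        obtain ⟨m, rfl⟩ : ∃ m, n = m + 1 := ⟨n - 1, by omega⟩
        have hpow : 3 * 2 ^ (m + 1 + 1 - 1) = 2 * (3 * 2 ^ (m + 1 - 1)) := by
          simp only [Nat.add_sub_cancel, pow_succ]
          ring
        omega
  have hset : {u : V | G.Reachable v u ∧ G.dist v u = T} = ↑(S T) := by
    ext u; simp [S]
  rw [hset, Set.ncard_coe_finset]
  exact main T hT le_rfl
end

section
/- Let G be a finite connected simple graph on n ≥ 2 vertices, let T = ⌈log₂(⌊log₂ n⌋ + 1)⌉, let v be a vertex of G, and let C be a set of vertices of G containing every vertex u with dist_G(v,u) ≤ T. If the number of edges of G with exactly one endpoint in C is less than ⌊log₂ n⌋ + 1, then the subgraph of G induced on C contains a cycle, or some vertex of C has degree at most 2 in G. -/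
open Finset

namespace LowDegreeAux

variable {V : Type*}

lemma dist_facts_of_support [DecidableEq V] {G : SimpleGraph V} {r x : V} {p : G.Walk r x}
    (hp : p.length = G.dist r x) {z : V} (hz : z ∈ p.support) :
    G.dist r z ≤ G.dist r x ∧ (G.dist r z = G.dist r x → z = x) := by
  have h1 : G.dist r z ≤ (p.takeUntil z hz).length := SimpleGraph.dist_le _
  have h2 : (p.takeUntil z hz).length + (p.dropUntil z hz).length = p.length := by
    rw [← SimpleGraph.Walk.length_append, SimpleGraph.Walk.take_spec]
  refine ⟨by omega, fun he => ?_⟩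
  have h3 : (p.dropUntil z hz).length = 0 := by omega
  exact SimpleGraph.Walk.eq_of_length_eq_zero h3

lemma exists_shortest_path [DecidableEq V] {G : SimpleGraph V} {r x : V} (h : G.Reachable r x) :
    ∃ p : G.Walk r x, p.IsPath ∧ p.length = G.dist r x := by
  obtain ⟨p, hp⟩ := h.exists_walk_length_eq_dist
  exact ⟨p.bypass, p.bypass_isPath,
    le_antisymm (hp ▸ p.length_bypass_le) (SimpleGraph.dist_le _)⟩

lemma core1 {W : Type*} {H : SimpleGraph W} (hH : H.IsAcyclic) {r w x y : W}
    (hwx : H.Adj x w) (hwy : H.Adj y w)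
    {px : H.Walk r x} {py : H.Walk r y} (hpx : px.IsPath) (hpy : py.IsPath)
    (hwpx : w ∉ px.support) (hwpy : w ∉ py.support)
    (hkey : px.support = py.support → False) : False := by
  rw [SimpleGraph.isAcyclic_iff_path_unique] at hH
  have h1 : (SimpleGraph.Walk.cons hwx.symm px.reverse).IsPath := by
    rw [SimpleGraph.Walk.cons_isPath_iff]
    exact ⟨hpx.reverse, by rwa [SimpleGraph.Walk.support_reverse, List.mem_reverse]⟩
  have h2 : (SimpleGraph.Walk.cons hwy.symm py.reverse).IsPath := by
    rw [SimpleGraph.Walk.cons_isPath_iff]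
    exact ⟨hpy.reverse, by rwa [SimpleGraph.Walk.support_reverse, List.mem_reverse]⟩
  have heq := hH ⟨_, h1⟩ ⟨_, h2⟩
  apply hkey
  have hs := congrArg (fun q : H.Path w r => q.1.support) heq
  simp only [SimpleGraph.Walk.support_cons, SimpleGraph.Walk.support_reverse] at hs
  have := List.tail_eq_of_cons_eq hs
  exact List.reverse_injective this

lemma core2 {W : Type*} {H : SimpleGraph W} (hH : H.IsAcyclic) {r a b : W}
    (hab : H.Adj a b)
    {p : H.Walk r a} {q : H.Walk r b} (hp : p.IsPath) (hq : q.IsPath)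
    (haq : a ∉ q.support) (hkey : b ∈ p.support → False) : False := by
  rw [SimpleGraph.isAcyclic_iff_path_unique] at hH
  have h2 : (SimpleGraph.Walk.cons hab q.reverse).IsPath := by
    rw [SimpleGraph.Walk.cons_isPath_iff]
    exact ⟨hq.reverse, by rwa [SimpleGraph.Walk.support_reverse, List.mem_reverse]⟩
  have heq := hH ⟨_, hp.reverse⟩ ⟨_, h2⟩
  have hs := congrArg (fun q : H.Path a r => q.1.support) heq
  simp only [SimpleGraph.Walk.support_cons, SimpleGraph.Walk.support_reverse] at hs
  apply hkey
  have hb : b ∈ p.support.reverse := by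
    rw [hs]
    exact List.mem_cons_of_mem _ (List.mem_reverse.mpr q.end_mem_support)
  exact List.mem_reverse.mp hb

lemma induce_walk {G : SimpleGraph V} {C : Set V} :
    ∀ {a b : V} (p : G.Walk a b) (_ : ∀ z ∈ p.support, z ∈ C) (ha : a ∈ C) (hb : b ∈ C),
    ∃ q : (G.induce C).Walk ⟨a, ha⟩ ⟨b, hb⟩, q.support.map Subtype.val = p.support := by
  intro a b p
  induction p with
  | nil => exact fun hs ha hb => ⟨SimpleGraph.Walk.nil, by simp⟩
  | @cons a c b h p ih =>
    intro hs ha hb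
    have hc : c ∈ C := hs c (by simp)
    obtain ⟨q, hq⟩ := ih (fun z hz => hs z (by simp [hz])) hc hb
    exact ⟨SimpleGraph.Walk.cons (by simpa using h) q, by simp [hq]⟩

lemma lemA [DecidableEq V] {G : SimpleGraph V} (hG : G.Connected) {T : ℕ} {v : V} {C : Set V}
    (hC : ∀ u : V, G.dist v u ≤ T → u ∈ C)
    (hac : (G.induce C).IsAcyclic)
    {w x y : V} (hw : w ∈ C) (hwx : G.Adj w x) (hwy : G.Adj w y)
    (hxT : G.dist v x ≤ T) (hyT : G.dist v y ≤ T)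
    (hxw : G.dist v x ≤ G.dist v w) (hyw : G.dist v y ≤ G.dist v w) :
    x = y := by
  by_contra hne
  obtain ⟨px, hpx, hlx⟩ := exists_shortest_path (hG v x)
  obtain ⟨py, hpy, hly⟩ := exists_shortest_path (hG v y)
  have hsx : ∀ z ∈ px.support, z ∈ C := fun z hz =>
    hC z ((dist_facts_of_support hlx hz).1.trans hxT)
  have hsy : ∀ z ∈ py.support, z ∈ C := fun z hz =>
    hC z ((dist_facts_of_support hly hz).1.trans hyT)
  have hvC : v ∈ C := hC v (by simp [SimpleGraph.dist_self])
  have hxC : x ∈ C := hC x hxT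
  have hyC : y ∈ C := hC y hyT
  obtain ⟨qx, hqx⟩ := induce_walk px hsx hvC hxC
  obtain ⟨qy, hqy⟩ := induce_walk py hsy hvC hyC
  have hqxp : qx.IsPath := by
    rw [SimpleGraph.Walk.isPath_def]
    have h := hpx.support_nodup
    rw [← hqx] at h
    exact h.of_map _
  have hqyp : qy.IsPath := by
    rw [SimpleGraph.Walk.isPath_def]
    have h := hpy.support_nodup
    rw [← hqy] at h
    exact h.of_map _
  have hwqx : (⟨w, hw⟩ : C) ∉ qx.support := by
    intro hmem
    have hm : w ∈ px.support := by
      have := List.mem_map_of_mem (f := Subtype.val) hmem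
      rwa [hqx] at this
    obtain ⟨h1, h2⟩ := dist_facts_of_support hlx hm
    exact hwx.ne (h2 (le_antisymm h1 hxw))
  have hwqy : (⟨w, hw⟩ : C) ∉ qy.support := by
    intro hmem
    have hm : w ∈ py.support := by
      have := List.mem_map_of_mem (f := Subtype.val) hmem
      rwa [hqy] at this
    obtain ⟨h1, h2⟩ := dist_facts_of_support hly hm
    exact hwy.ne (h2 (le_antisymm h1 hyw))
  refine core1 hac (x := (⟨x, hxC⟩ : C)) (y := (⟨y, hyC⟩ : C)) (w := (⟨w, hw⟩ : C))
    (by simpa using hwx.symm) (by simpa using hwy.symm) hqxp hqyp hwqx hwqy ?_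
  intro hsup
  have hmap : px.support = py.support := by rw [← hqx, ← hqy, hsup]
  have hx' : x ∈ py.support := hmap ▸ px.end_mem_support
  have hy' : y ∈ px.support := hmap.symm ▸ py.end_mem_support
  obtain ⟨h1, h2⟩ := dist_facts_of_support hly hx'
  obtain ⟨h3, _⟩ := dist_facts_of_support hlx hy'
  exact hne (h2 (le_antisymm h1 h3))

lemma sphere_grow {V : Type} [Fintype V] [DecidableEq V] (G : SimpleGraph V) [DecidableRel G.Adj]
    (hG : G.Connected) {T : ℕ} {v : V} {C : Set V}
    (hC : ∀ u : V, G.dist v u ≤ T → u ∈ C)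
    (hac : (G.induce C).IsAcyclic)
    (h3 : ∀ u ∈ C, 3 ≤ G.degree u)
    {t : ℕ} (ht : t + 1 ≤ T) :
    2 * #(univ.filter (fun u => G.dist v u = t)) ≤
      #(univ.filter (fun u => G.dist v u = t + 1)) := by
  set St := univ.filter (fun u => G.dist v u = t) with hSt
  set St1 := univ.filter (fun u => G.dist v u = t + 1) with hSt1
  have step1 : ∀ u ∈ St, 2 ≤ #(St1 ∩ G.neighborFinset u) := by
    intro u hu
    have hut : G.dist v u = t := (mem_filter.mp hu).2
    have huC : u ∈ C := hC u (by omega)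
    have hsplit : G.neighborFinset u ⊆
        (G.neighborFinset u).filter (fun z => G.dist v z ≤ t) ∪ (St1 ∩ G.neighborFinset u) := by
      intro z hz
      have hz' : G.Adj u z := by rwa [SimpleGraph.mem_neighborFinset] at hz
      have hd1 : G.dist u z ≤ 1 := SimpleGraph.dist_le (SimpleGraph.Walk.cons hz' SimpleGraph.Walk.nil)
      have hd : G.dist v z ≤ t + 1 := le_trans (hG.dist_triangle (u := v) (v := u) (w := z)) (by omega)
      by_cases hle : G.dist v z ≤ t
      · exact mem_union_left _ (mem_filter.mpr ⟨hz, hle⟩)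
      · exact mem_union_right _ (mem_inter.mpr ⟨mem_filter.mpr ⟨mem_univ _, by omega⟩, hz⟩)
    have h1 : #((G.neighborFinset u).filter (fun z => G.dist v z ≤ t)) ≤ 1 := by
      rw [Finset.card_le_one]
      intro a ha b hb
      rw [mem_filter, SimpleGraph.mem_neighborFinset] at ha hb
      exact lemA hG hC hac huC ha.1 hb.1 (ha.2.trans (by omega)) (hb.2.trans (by omega))
        (by omega) (by omega)
    have hdeg := h3 u huC
    rw [← SimpleGraph.card_neighborFinset_eq_degree] at hdeg
    have := (card_le_card hsplit).trans (card_union_le _ _)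
    omega
  have step2 : ∀ w ∈ St1, #(St ∩ G.neighborFinset w) ≤ 1 := by
    intro w hw
    have hwt : G.dist v w = t + 1 := (mem_filter.mp hw).2
    have hwC : w ∈ C := hC w (by omega)
    rw [Finset.card_le_one]
    intro a ha b hb
    rw [mem_inter, mem_filter, SimpleGraph.mem_neighborFinset] at ha hb
    exact lemA hG hC hac hwC ha.2 hb.2 (by omega) (by omega) (by omega) (by omega)
  have key : ∑ u ∈ St, #(St1 ∩ G.neighborFinset u) = ∑ w ∈ St1, #(St ∩ G.neighborFinset w) := by
    have hrepr : ∀ (A B : Finset V) (u : V), #(B ∩ G.neighborFinset u) =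
        ∑ w ∈ B, if G.Adj u w then 1 else 0 := by
      intro A B u
      rw [← Finset.card_filter]
      congr 1
      ext z
      simp [SimpleGraph.mem_neighborFinset, and_comm]
    calc ∑ u ∈ St, #(St1 ∩ G.neighborFinset u)
        = ∑ u ∈ St, ∑ w ∈ St1, if G.Adj u w then 1 else 0 := by
          exact Finset.sum_congr rfl fun u _ => hrepr St St1 u
      _ = ∑ w ∈ St1, ∑ u ∈ St, if G.Adj u w then 1 else 0 := Finset.sum_comm
      _ = ∑ w ∈ St1, #(St ∩ G.neighborFinset w) := by
          refine Finset.sum_congr rfl fun w _ => ?_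
          rw [hrepr St1 St w]
          refine Finset.sum_congr rfl fun u _ => ?_
          exact if_congr (G.adj_comm u w) rfl rfl
  calc 2 * #St = ∑ _u ∈ St, 2 := by rw [Finset.sum_const, smul_eq_mul, mul_comm]
    _ ≤ ∑ u ∈ St, #(St1 ∩ G.neighborFinset u) := Finset.sum_le_sum step1
    _ = ∑ w ∈ St1, #(St ∩ G.neighborFinset w) := key
    _ ≤ ∑ _w ∈ St1, 1 := Finset.sum_le_sum step2
    _ = #St1 := by simp

lemma forest_bound {W : Type*} [Fintype W] [DecidableEq W] (H : SimpleGraph W)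
    [DecidableRel H.Adj] (hH : H.IsAcyclic) (w0 : W) :
    #(H.edgeFinset) + 1 ≤ Fintype.card W := by
  set rt : W → W := fun z => (H.connectedComponentMk z).out with hrt
  have hmk : ∀ z, H.connectedComponentMk (rt z) = H.connectedComponentMk z := fun z =>
    (H.connectedComponentMk z).out_eq
  have hreach : ∀ z, H.Reachable (rt z) z := fun z =>
    SimpleGraph.ConnectedComponent.exact (hmk z)
  set d : W → ℕ := fun z => H.dist (rt z) z with hd
  have hrt_adj : ∀ {a b : W}, H.Adj a b → rt a = rt b := fun hab =>
    congrArg Quot.out (SimpleGraph.ConnectedComponent.connectedComponentMk_eq_of_adj hab)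
  -- no edge between vertices of equal d
  have hne_d : ∀ {a b : W}, H.Adj a b → d a ≠ d b := by
    intro a b hab heq
    obtain ⟨p, hp, hlp⟩ := exists_shortest_path (hreach a)
    have hrb : H.Reachable (rt a) b := (hrt_adj hab) ▸ hreach b
    obtain ⟨q, hq, hlq⟩ := exists_shortest_path hrb
    have hdb : H.dist (rt a) b = d b := by rw [hd]; rw [hrt_adj hab]
    have hda : H.dist (rt a) a = d a := rfl
    have haq : a ∉ q.support := by
      intro hmem
      obtain ⟨h1, h2⟩ := dist_facts_of_support hlq hmem
      exact hab.ne (h2 (by omega))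
    refine core2 hH hab hp hq haq ?_
    intro hmem
    obtain ⟨h1, h2⟩ := dist_facts_of_support hlp hmem
    exact hab.ne (h2 (by omega)).symm
  -- each vertex has at most one neighbor of smaller d
  set pd : W → ℕ := fun w => #((H.neighborFinset w).filter (fun x => d x < d w)) with hpd
  have hpd_le : ∀ w, pd w ≤ 1 := by
    intro w
    show #((H.neighborFinset w).filter (fun x => d x < d w)) ≤ 1
    rw [Finset.card_le_one]
    intro a ha b hb
    rw [mem_filter, SimpleGraph.mem_neighborFinset] at ha hb
    by_contra hne
    have hra : H.Reachable (rt w) a := (hrt_adj ha.1) ▸ hreach a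
    have hrb : H.Reachable (rt w) b := (hrt_adj hb.1) ▸ hreach b
    have hda : H.dist (rt w) a = d a := by rw [hd, hrt_adj ha.1]
    have hdb : H.dist (rt w) b = d b := by rw [hd, hrt_adj hb.1]
    obtain ⟨p, hp, hlp⟩ := exists_shortest_path hra
    obtain ⟨q, hq, hlq⟩ := exists_shortest_path hrb
    have hwp : w ∉ p.support := by
      intro hmem
      have h1 := (dist_facts_of_support hlp hmem).1
      have hdw : H.dist (rt w) w = d w := rfl
      have ha2 : d a < d w := ha.2
      omega
    have hwq : w ∉ q.support := by
      intro hmem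
      have h1 := (dist_facts_of_support hlq hmem).1
      have hdw : H.dist (rt w) w = d w := rfl
      have hb2 : d b < d w := hb.2
      omega
    refine core1 hH ha.1.symm hb.1.symm hp hq hwp hwq ?_
    intro hsup
    have ha' : a ∈ q.support := hsup ▸ p.end_mem_support
    have hb' : b ∈ p.support := hsup.symm ▸ q.end_mem_support
    obtain ⟨h1, h2⟩ := dist_facts_of_support hlq ha'
    obtain ⟨h3, _⟩ := dist_facts_of_support hlp hb'
    exact hne (h2 (le_antisymm h1 h3))
  -- the root has no neighbor of smaller d
  have hrt0 : rt (rt w0) = rt w0 := congrArg Quot.out (hmk w0)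
  have hd0 : d (rt w0) = 0 := by
    show H.dist (rt (rt w0)) (rt w0) = 0
    rw [hrt0, SimpleGraph.dist_self]
  have hpd_r0 : pd (rt w0) = 0 := by
    show #((H.neighborFinset (rt w0)).filter (fun x => d x < d (rt w0))) = 0
    rw [Finset.card_eq_zero, Finset.filter_eq_empty_iff]
    intro x _
    omega
  -- degree = pd + pu
  set pu : W → ℕ := fun w => #((H.neighborFinset w).filter (fun x => d w < d x)) with hpu
  have hdeg : ∀ w, H.degree w = pd w + pu w := by
    intro w
    show H.degree w = #((H.neighborFinset w).filter (fun x => d x < d w)) +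
      #((H.neighborFinset w).filter (fun x => d w < d x))
    rw [← SimpleGraph.card_neighborFinset_eq_degree,
      ← Finset.card_filter_add_card_filter_not (s := H.neighborFinset w)
      (p := fun x => d x < d w)]
    congr 1
    refine congrArg Finset.card (Finset.filter_congr fun z hz => ?_)
    rw [SimpleGraph.mem_neighborFinset] at hz
    have := hne_d hz
    constructor
    · intro h; omega
    · intro h; omega
  -- sum pu = sum pd
  have hswap : ∑ w, pu w = ∑ w, pd w := by
    have h1 : ∀ w, pd w = ∑ x, if H.Adj w x ∧ d x < d w then 1 else 0 := by
      intro w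
      show #((H.neighborFinset w).filter (fun x => d x < d w)) = _
      rw [SimpleGraph.neighborFinset_eq_filter, Finset.filter_filter, Finset.card_filter]
    have h2 : ∀ w, pu w = ∑ x, if H.Adj w x ∧ d w < d x then 1 else 0 := by
      intro w
      show #((H.neighborFinset w).filter (fun x => d w < d x)) = _
      rw [SimpleGraph.neighborFinset_eq_filter, Finset.filter_filter, Finset.card_filter]
    calc ∑ w, pu w = ∑ w, ∑ x, if H.Adj w x ∧ d w < d x then 1 else 0 :=
          Finset.sum_congr rfl fun w _ => h2 w
      _ = ∑ x, ∑ w, if H.Adj w x ∧ d w < d x then 1 else 0 := Finset.sum_comm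
      _ = ∑ x, pd x := by
          refine Finset.sum_congr rfl fun x _ => ?_
          rw [h1 x]
          refine Finset.sum_congr rfl fun w _ => ?_
          exact if_congr (and_congr (H.adj_comm w x) Iff.rfl) rfl rfl
  have hsum := SimpleGraph.sum_degrees_eq_twice_card_edges H
  have he : #(H.edgeFinset) = ∑ w, pd w := by
    have h2 : ∑ w, H.degree w = ∑ w, pd w + ∑ w, pu w := by
      rw [Finset.sum_congr rfl fun w _ => hdeg w, Finset.sum_add_distrib]
    omega
  have hfin : ∑ w, pd w + 1 ≤ Fintype.card W := by
    have hmem : rt w0 ∈ (univ : Finset W) := mem_univ _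
    rw [← Finset.sum_erase_add _ _ hmem, hpd_r0, add_zero]
    have hb : ∑ w ∈ univ.erase (rt w0), pd w ≤ ∑ _w ∈ univ.erase (rt w0), 1 :=
      Finset.sum_le_sum fun w _ => hpd_le w
    have hc : #(univ.erase (rt w0)) + 1 = Fintype.card W := by
      rw [Finset.card_erase_of_mem hmem, Finset.card_univ]
      have : 0 < Fintype.card W := Fintype.card_pos_iff.mpr ⟨w0⟩
      omega
    simp only [Finset.sum_const, smul_eq_mul, mul_one] at hb
    omega
  omega

end LowDegreeAux

/-- Let `G` be a finite connected simple graph on `n ≥ 2` vertices, let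
`T = ⌈log₂(⌊log₂ n⌋ + 1)⌉` (here `Nat.log` is floor-log and `Nat.clog` is
ceiling-log), let `v` be a vertex, and let `C` be a set of vertices containing
every vertex `u` with `dist v u ≤ T`. If the number of edges of `G` with
exactly one endpoint in `C` is less than `⌊log₂ n⌋ + 1`, then the subgraph
induced on `C` contains a cycle, or some vertex of `C` has degree at most 2. -/
theorem low_degree_cluster_has_cycle_or_low_degree_vertex {V : Type} [Fintype V] [DecidableEq V]
    (G : SimpleGraph V) [DecidableRel G.Adj] (hG : G.Connected)
    (hn : 2 ≤ Fintype.card V)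
    (T : ℕ) (hT : T = Nat.clog 2 (Nat.log 2 (Fintype.card V) + 1))
    (v : V) (C : Set V) (hC : ∀ u : V, G.dist v u ≤ T → u ∈ C)
    (hbound : {e ∈ G.edgeSet | ∃ u w : V, e = s(u, w) ∧ u ∈ C ∧ w ∉ C}.ncard
        < Nat.log 2 (Fintype.card V) + 1) :
    ¬ (G.induce C).IsAcyclic ∨ ∃ u ∈ C, G.degree u ≤ 2 := by
  classical
  by_contra hcon
  push_neg at hcon
  obtain ⟨hac, hdeg⟩ := hcon
  have h3 : ∀ u ∈ C, 3 ≤ G.degree u := fun u hu => by have := hdeg u hu; omega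
  set L := Nat.log 2 (Fintype.card V) with hL
  have hvC : v ∈ C := hC v (by simp [SimpleGraph.dist_self])
  have hgrow : ∀ t, t ≤ T → 2 ^ t ≤ #(univ.filter (fun u => G.dist v u = t)) := by
    intro t
    induction t with
    | zero =>
      intro _
      rw [pow_zero]
      exact Finset.card_pos.mpr ⟨v, mem_filter.mpr ⟨mem_univ v, SimpleGraph.dist_self⟩⟩
    | succ t ih =>
      intro hle
      have h2 := LowDegreeAux.sphere_grow G hG hC hac h3 hle
      have h1 := ih (by omega)
      calc (2:ℕ) ^ (t+1) = 2 * 2 ^ t := by ring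
        _ ≤ 2 * #(univ.filter (fun u => G.dist v u = t)) := by omega
        _ ≤ #(univ.filter (fun u => G.dist v u = t + 1)) := h2
  have hST := hgrow T le_rfl
  have hpow : L + 1 ≤ 2 ^ T := by rw [hT]; exact Nat.le_pow_clog one_lt_two _
  set Cf : Finset V := C.toFinset with hCf
  have hCcard : L + 1 ≤ #Cf := by
    refine le_trans (hpow.trans hST) (card_le_card ?_)
    intro z hz
    rw [hCf, Set.mem_toFinset]
    exact hC z (le_of_eq (mem_filter.mp hz).2)
  have hforest := LowDegreeAux.forest_bound (G.induce C) hac ⟨v, hvC⟩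
  have hcardC : Fintype.card ↥C = #Cf := by rw [hCf, Set.toFinset_card]
  have hdegeq : ∀ w : ↥C, (G.induce C).degree w = #(G.neighborFinset w.val ∩ Cf) := by
    intro w
    rw [← SimpleGraph.card_neighborFinset_eq_degree]
    refine Finset.card_bij (fun x _ => x.val) ?_ ?_ ?_
    · intro x hx
      rw [SimpleGraph.mem_neighborFinset] at hx
      rw [mem_inter, SimpleGraph.mem_neighborFinset, hCf, Set.mem_toFinset]
      exact ⟨by simpa using hx, x.2⟩
    · intro x _ y _ h
      exact Subtype.ext h
    · intro z hz
      rw [mem_inter, SimpleGraph.mem_neighborFinset, hCf, Set.mem_toFinset] at hz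
      refine ⟨⟨z, hz.2⟩, ?_, rfl⟩
      rw [SimpleGraph.mem_neighborFinset]
      simpa using hz.1
  have hIn : ∑ u ∈ Cf, #(G.neighborFinset u ∩ Cf) = 2 * #(G.induce C).edgeFinset := by
    rw [← SimpleGraph.sum_degrees_eq_twice_card_edges]
    rw [Finset.sum_subtype Cf (fun x => by rw [hCf, Set.mem_toFinset])
      (fun u => #(G.neighborFinset u ∩ Cf))]
    exact Finset.sum_congr rfl fun w _ => (hdegeq w).symm
  have hOut : ∑ u ∈ Cf, #(G.neighborFinset u \ Cf) ≤ L := by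
    have h1 : ∑ u ∈ Cf, #(G.neighborFinset u \ Cf) =
        #(Cf.sigma (fun u => G.neighborFinset u \ Cf)) := (Finset.card_sigma _ _).symm
    have h2 : #(Cf.sigma (fun u => G.neighborFinset u \ Cf)) ≤
        #({e ∈ G.edgeSet | ∃ u w : V, e = s(u, w) ∧ u ∈ C ∧ w ∉ C}.toFinset) := by
      refine Finset.card_le_card_of_injOn (fun p => s(p.1, p.2)) ?_ ?_
      · rintro ⟨u, z⟩ hp
        rw [Finset.mem_coe, Finset.mem_sigma] at hp
        obtain ⟨hu, hz⟩ := hp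
        rw [Finset.mem_sdiff, SimpleGraph.mem_neighborFinset] at hz
        rw [hCf, Set.mem_toFinset] at hu
        have hznC : z ∉ C := fun hzc => hz.2 (by rw [hCf, Set.mem_toFinset]; exact hzc)
        rw [Finset.mem_coe, Set.mem_toFinset]
        exact ⟨hz.1, u, z, rfl, hu, hznC⟩
      · rintro ⟨u, z⟩ hp ⟨u', z'⟩ hp' heq
        rw [Finset.mem_coe, Finset.mem_sigma] at hp hp'
        have huC : u ∈ C := by
          have := hp.1; rw [hCf, Set.mem_toFinset] at this; exact this
        have hz'C : z' ∉ C := by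
          have := hp'.2; rw [Finset.mem_sdiff] at this
          exact fun hzc => this.2 (by rw [hCf, Set.mem_toFinset]; exact hzc)
        simp only at heq
        rw [Sym2.eq_iff] at heq
        rcases heq with ⟨h1', h2'⟩ | ⟨h1', h2'⟩
        · subst h1'; subst h2'; rfl
        · exact absurd (h1' ▸ huC) hz'C
    have h3' : #({e ∈ G.edgeSet | ∃ u w : V, e = s(u, w) ∧ u ∈ C ∧ w ∉ C}.toFinset) ≤ L := by
      rw [← Set.ncard_eq_toFinset_card']
      omega
    omega
  have hdegsum : 3 * #Cf ≤ ∑ u ∈ Cf, G.degree u := by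
    calc 3 * #Cf = ∑ _u ∈ Cf, 3 := by rw [Finset.sum_const, smul_eq_mul, mul_comm]
      _ ≤ ∑ u ∈ Cf, G.degree u :=
        Finset.sum_le_sum fun u hu => h3 u (by rwa [hCf, Set.mem_toFinset] at hu)
  have hsplit : ∑ u ∈ Cf, G.degree u =
      ∑ u ∈ Cf, #(G.neighborFinset u ∩ Cf) + ∑ u ∈ Cf, #(G.neighborFinset u \ Cf) := by
    rw [← Finset.sum_add_distrib]
    refine Finset.sum_congr rfl fun u _ => ?_
    rw [← SimpleGraph.card_neighborFinset_eq_degree]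
    exact (Finset.card_inter_add_card_sdiff _ _).symm
  rw [hcardC] at hforest
  omega
end

section
/- Let G be a finite simple graph and let H be its bipartite double cover: the simple graph on vertex set V(G) × Bool in which (u,b) is adjacent to (v,c) if and only if u is adjacent to v in G and b ≠ c. Then the girth of H is at least the girth of G (as extended natural numbers, with girth ∞ when the graph is acyclic). -/
/-- The bipartite double cover of a simple graph `G`: the graph on `V × Bool`
where `(u, b)` is adjacent to `(v, c)` iff `u` is adjacent to `v` in `G` and
`b ≠ c`. -/
def bipartiteDoubleCover {V : Type} (G : SimpleGraph V) : SimpleGraph (V × Bool) where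
  Adj x y := G.Adj x.1 y.1 ∧ x.2 ≠ y.2
  symm := ⟨fun _ _ ⟨h, hb⟩ => ⟨h.symm, hb.symm⟩⟩
  loopless := ⟨fun _ ⟨_, hb⟩ => hb rfl⟩

open SimpleGraph hiding bipartiteDoubleCover
open SimpleGraph.Walk

section Aux

variable {W : Type} {G : SimpleGraph W}

/-- In a path from `u` to `v`, if the edge `s(u,v)` appears, the path has length 1. -/
private lemma path_length_one_of_edge_mem {u v : W} (p : G.Walk u v) (hp : p.IsPath)
    (he : s(u, v) ∈ p.edges) : p.length = 1 := by
  cases p with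
  | nil => simp at he
  | @cons _ w _ h p₂ =>
    rw [Walk.edges_cons, List.mem_cons] at he
    rcases he with he | he
    · have hvw : v = w := by
        rw [Sym2.eq_iff] at he
        rcases he with ⟨-, h2⟩ | ⟨h1, -⟩
        · exact h2
        · exact absurd h1 h.ne
      subst hvw
      have : p₂ = Walk.nil := by
        have hp₂ : p₂.IsPath := (Walk.cons_isPath_iff h p₂).1 hp |>.1
        cases p₂ with
        | nil => rfl
        | cons h' q =>
          exfalso
          rw [Walk.cons_isPath_iff] at hp₂
          exact hp₂.2 (Walk.end_mem_support q)
      subst this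
      simp
    · exfalso
      have : u ∈ p₂.support := Walk.fst_mem_support_of_mem_edges p₂ he
      exact ((Walk.cons_isPath_iff h p₂).1 hp).2 this

/-- In a path starting at `u`, if an edge `s(u,x)` with `x ≠ u` appears, then `x` is the
second vertex of the path (i.e. the path is `cons` with the neighbor being `x`). -/
private lemma second_vertex_of_edge_mem {u v x w : W} (h : G.Adj u w) (p : G.Walk w v)
    (hp : (Walk.cons h p).IsPath) (he : s(u, x) ∈ (Walk.cons h p).edges) (hx : x ≠ u) :
    x = w := by
  rw [Walk.edges_cons, List.mem_cons] at he
  rcases he with he | he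
  · rw [Sym2.eq_iff] at he
    rcases he with ⟨-, h2⟩ | ⟨h1, h2⟩
    · exact h2
    · exact absurd h2 hx
  · exfalso
    have : u ∈ p.support := Walk.fst_mem_support_of_mem_edges p he
    exact ((Walk.cons_isPath_iff h p).1 hp).2 this

/-- A closed walk of length at least 3 whose tail support has no duplicates is a cycle. -/
private lemma isCycle_of_tail_nodup {x : W} (c : G.Walk x x) (h3 : 3 ≤ c.length)
    (hn : c.support.tail.Nodup) : c.IsCycle := by
  cases c with
  | nil => simp at h3
  | @cons _ y _ h c' =>
    have hc' : c'.IsPath := by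
      rw [Walk.isPath_def]
      simpa using hn
    rw [Walk.cons_isCycle_iff]
    refine ⟨hc', fun he => ?_⟩
    have := path_length_one_of_edge_mem c' hc' (by rwa [Sym2.eq_swap])
    simp [Walk.length_cons, this] at h3

end Aux

section Proj

variable {V : Type}

/-- The projection homomorphism from the bipartite double cover to the base graph. -/
private def bdcProj (G : SimpleGraph V) : bipartiteDoubleCover G →g G :=
  ⟨Prod.fst, fun h => h.1⟩

private lemma exists_cycle_of_proj_not_nodup (G : SimpleGraph V) :
    ∀ {s t : V × Bool} (q : (bipartiteDoubleCover G).Walk s t), q.IsPath →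
      ¬ (q.map (bdcProj G)).support.Nodup →
      ∃ (x : V) (c : G.Walk x x), c.IsCycle ∧ c.length ≤ q.length := by
  intro s t q
  induction q with
  | nil => intro _ hnd; exact absurd (by simp) hnd
  | @cons s s' t h q' ih =>
    intro hq hnd
    rw [Walk.cons_isPath_iff] at hq
    obtain ⟨hq', hs⟩ := hq
    by_cases hnd' : (q'.map (bdcProj G)).support.Nodup
    · -- s.1 occurs in the projection of q'
      have hu : s.1 ∈ (q'.map (bdcProj G)).support := by
        by_contra hmem
        apply hnd
        rw [Walk.map_cons, Walk.support_cons, List.nodup_cons]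
        exact ⟨hmem, hnd'⟩
      have hp' : (q'.map (bdcProj G)).IsPath := (Walk.isPath_def _).2 hnd'
      classical
      set p := q'.map (bdcProj G) with hpdef
      let d := p.takeUntil s.1 hu
      have hd : d.IsPath := hp'.takeUntil hu
      by_cases he : s(s.1, s'.1) ∈ d.edges
      · exfalso
        have he' : s(s.1, s'.1) ∈ p.edges := Walk.edges_takeUntil_subset p hu he
        cases q' with
        | nil => simp [hpdef] at he'
        | @cons _ z _ h₂ q₂ =>
          have hne : s.1 ≠ s'.1 := h.1.ne
          have hz : s.1 = z.1 := by
            have hpc : p = Walk.cons (bdcProj G |>.map_adj h₂) (q₂.map (bdcProj G)) := by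
              simp [hpdef, Walk.map_cons]
            have hp2 : (Walk.cons (bdcProj G |>.map_adj h₂) (q₂.map (bdcProj G))).IsPath := by
              rw [← hpc]; exact hp'
            have he2 : s((bdcProj G) s', s.1) ∈
                (Walk.cons (bdcProj G |>.map_adj h₂) (q₂.map (bdcProj G))).edges := by
              rw [← hpc]; rwa [Sym2.eq_swap]
            have hne2 : s.1 ≠ (bdcProj G) s' := hne
            exact second_vertex_of_edge_mem _ _ hp2 he2 hne2
          have hzb : z.2 = s.2 := by
            have h1 : s.2 ≠ s'.2 := h.2
            have h2 : s'.2 ≠ z.2 := h₂.2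
            revert h1 h2
            cases s.2 <;> cases s'.2 <;> cases z.2 <;> simp
          have hzs : z = s := Prod.ext hz.symm hzb
          apply hs
          rw [← hzs]
          exact Walk.support_cons h₂ q₂ ▸ List.mem_cons_of_mem _ (Walk.start_mem_support q₂)
      · refine ⟨s.1, Walk.cons h.1 d, ?_, ?_⟩
        · exact (Walk.cons_isCycle_iff d h.1).2 ⟨hd, he⟩
        · have hdl : d.length ≤ p.length := Walk.length_takeUntil_le p hu
          simp only [Walk.length_cons]
          have hlen : p.length = q'.length := Walk.length_map _ _
          have hcl : (Walk.cons h.1 d).length = d.length + 1 := rfl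
          omega
    · obtain ⟨x, c, hc, hlen⟩ := ih hq' hnd'
      exact ⟨x, c, hc, by simp [Walk.length_cons]; omega⟩

/-- Any cycle in the double cover yields a cycle in the base of at most the same length. -/
private lemma exists_cycle_le_of_cycle_cover (G : SimpleGraph V) {z : V × Bool}
    (w : (bipartiteDoubleCover G).Walk z z) (hw : w.IsCycle) :
    ∃ (x : V) (c : G.Walk x x), c.IsCycle ∧ c.length ≤ w.length := by
  cases w with
  | nil => exact absurd hw (Walk.IsCycle.not_of_nil)
  | @cons _ s _ h q =>
    obtain ⟨hq, he⟩ := (Walk.cons_isCycle_iff q h).1 hw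
    by_cases hnd : (q.map (bdcProj G)).support.Nodup
    · have hp : (q.map (bdcProj G)).IsPath := (Walk.isPath_def _).2 hnd
      by_cases he' : s(z.1, s.1) ∈ (q.map (bdcProj G)).edges
      · exfalso
        have := path_length_one_of_edge_mem (q.map (bdcProj G)) hp (by rwa [Sym2.eq_swap])
        have h3 := hw.three_le_length
        have hlen : (q.map (bdcProj G)).length = q.length := Walk.length_map _ _
        simp only [Walk.length_cons] at h3
        omega
      · refine ⟨z.1, Walk.cons h.1 (q.map (bdcProj G)), ?_, ?_⟩
        · exact (Walk.cons_isCycle_iff _ h.1).2 ⟨hp, he'⟩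
        · show (q.map (bdcProj G)).length + 1 ≤ q.length + 1
          simp [Walk.length_cons, Walk.length_map]
    · obtain ⟨x, c, hc, hlen⟩ := exists_cycle_of_proj_not_nodup G q hq hnd
      exact ⟨x, c, hc, by simp [Walk.length_cons]; omega⟩

end Proj

section Lift

variable {V : Type} {G : SimpleGraph V}

private def zipAlt : List V → Bool → List (V × Bool)
  | [], _ => []
  | x :: l, b => (x, b) :: zipAlt l (!b)

private lemma map_fst_zipAlt : ∀ (l : List V) (b : Bool), (zipAlt l b).map Prod.fst = l
  | [], _ => rfl
  | x :: l, b => by simp [zipAlt, map_fst_zipAlt l (!b)]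

private lemma fst_mem_of_mem_zipAlt {l : List V} {b : Bool} {x : V × Bool}
    (hx : x ∈ zipAlt l b) : x.1 ∈ l := by
  rw [← map_fst_zipAlt l b]
  exact List.mem_map_of_mem hx

private lemma nodup_zipAlt {l : List V} (hl : l.Nodup) (b : Bool) : (zipAlt l b).Nodup :=
  List.Nodup.of_map Prod.fst (by rwa [map_fst_zipAlt])

private lemma disjoint_zipAlt : ∀ {l : List V}, l.Nodup → ∀ (b : Bool) (x : V × Bool),
    x ∈ zipAlt l b → x ∉ zipAlt l (!b) := by
  intro l
  induction l with
  | nil => intro _ b x hx; simp [zipAlt] at hx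
  | cons y l ih =>
    intro hl b x hx hx'
    rw [List.nodup_cons] at hl
    rw [zipAlt, List.mem_cons] at hx hx'
    rcases hx with rfl | hx
    · rcases hx' with h | h
      · simp at h
      · exact hl.1 (by simpa using fst_mem_of_mem_zipAlt h)
    · rcases hx' with rfl | h
      · exact hl.1 (by simpa using fst_mem_of_mem_zipAlt hx)
      · exact (ih hl.2 (!b) x hx) (by simpa using h)

private lemma zipAlt_append : ∀ (l₁ l₂ : List V) (b : Bool),
    zipAlt (l₁ ++ l₂) b = zipAlt l₁ b ++ zipAlt l₂ (if Even l₁.length then b else !b) := by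
  intro l₁
  induction l₁ with
  | nil => intro l₂ b; simp [zipAlt]
  | cons x l ih =>
    intro l₂ b
    show (x, b) :: zipAlt (l ++ l₂) (!b) =
      (x, b) :: zipAlt l (!b) ++ zipAlt l₂ (if Even (l.length + 1) then b else !b)
    rw [ih l₂ (!b)]
    by_cases h : Even l.length <;> simp [h, Nat.even_add_one]

private def liftEnd : ∀ {u v : V}, G.Walk u v → Bool → Bool
  | _, _, Walk.nil, b => b
  | _, _, Walk.cons _ q, b => liftEnd q (!b)

private lemma liftEnd_eq : ∀ {u v : V} (p : G.Walk u v) (b : Bool),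
    liftEnd p b = if Even p.length then b else !b
  | _, _, Walk.nil, b => by simp [liftEnd]
  | _, _, Walk.cons h q, b => by
    rw [liftEnd, liftEnd_eq q (!b)]
    simp only [Walk.length_cons, Nat.even_add_one]
    by_cases hq : Even q.length <;> simp [hq]

private def liftWalk : ∀ {u v : V} (p : G.Walk u v) (b : Bool),
    (bipartiteDoubleCover G).Walk (u, b) (v, liftEnd p b)
  | _, _, Walk.nil, b => Walk.nil
  | _, _, Walk.cons h q, b => Walk.cons ⟨h, by simp⟩ (liftWalk q (!b))

private lemma length_liftWalk : ∀ {u v : V} (p : G.Walk u v) (b : Bool),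
    (liftWalk p b).length = p.length
  | _, _, Walk.nil, b => rfl
  | _, _, Walk.cons h q, b => by
    show (liftWalk q (!b)).length + 1 = q.length + 1
    simp [liftWalk, Walk.length_cons, length_liftWalk q (!b)]

private lemma support_liftWalk : ∀ {u v : V} (p : G.Walk u v) (b : Bool),
    (liftWalk p b).support = zipAlt p.support b
  | _, _, Walk.nil, b => rfl
  | u, v, Walk.cons h q, b => by
    show (u, b) :: (liftWalk q (!b)).support = (u, b) :: zipAlt q.support (!b)
    simp [liftWalk, Walk.support_cons, zipAlt, support_liftWalk q (!b)]

/-- Any cycle in the base graph yields a cycle in the bipartite double cover. -/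
private lemma exists_cycle_cover {a : V} (c : G.Walk a a) (hc : c.IsCycle) :
    ∃ (z : V × Bool) (w : (bipartiteDoubleCover G).Walk z z), w.IsCycle := by
  have h3 := hc.three_le_length
  have htail : c.support.tail.Nodup := hc.support_nodup
  have htl : c.support.tail.length = c.length := by
    have h1 := Walk.length_support c
    rw [Walk.support_eq_cons c] at h1
    simpa using h1
  by_cases hev : Even c.length
  · -- lift directly
    have hend : liftEnd c false = false := by rw [liftEnd_eq]; simp [hev]
    refine ⟨(a, false), (liftWalk c false).copy rfl (by rw [hend]), ?_⟩
    apply isCycle_of_tail_nodup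
    · rw [Walk.length_copy, length_liftWalk]; exact h3
    · rw [Walk.support_copy, support_liftWalk, Walk.support_eq_cons c]
      simp only [zipAlt, List.tail_cons]
      exact nodup_zipAlt htail true
  · -- lift the doubled cycle
    set c2 := c.append c with hc2
    have hlen2 : c2.length = c.length + c.length := Walk.length_append c c
    have hev2 : Even c2.length := by rw [hlen2]; exact ⟨c.length, rfl⟩
    have hend : liftEnd c2 false = false := by rw [liftEnd_eq]; simp [hev2]
    refine ⟨(a, false), (liftWalk c2 false).copy rfl (by rw [hend]), ?_⟩
    apply isCycle_of_tail_nodup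
    · rw [Walk.length_copy, length_liftWalk]; omega
    · rw [Walk.support_copy, support_liftWalk]
      have hsup : c2.support = c.support ++ c.support.tail := Walk.support_append c c
      rw [hsup, Walk.support_eq_cons c]
      simp only [List.cons_append, zipAlt, List.tail_cons]
      show (zipAlt (c.support.tail ++ c.support.tail) true).Nodup
      rw [zipAlt_append]
      have : ¬ Even c.support.tail.length := by rwa [htl]
      rw [if_neg this]
      refine List.Nodup.append (nodup_zipAlt htail true) (nodup_zipAlt htail (!true)) ?_
      intro x hx hx'
      exact disjoint_zipAlt htail true x hx hx'

end Lift

/-- The girth of the bipartite double cover of a finite simple graph `G` is at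
least the girth of `G` (as extended naturals, `⊤` when the graph is acyclic). -/
theorem girth_le_girth_bipartiteDoubleCover {V : Type} [Fintype V] [DecidableEq V]
    (G : SimpleGraph V) :
    G.girth ≤ (bipartiteDoubleCover G).girth := by
  by_cases hH : (bipartiteDoubleCover G).IsAcyclic
  · -- the cover is acyclic, so the base is acyclic and its girth is 0
    have hG : G.IsAcyclic := by
      intro v c hc
      obtain ⟨z, w, hw⟩ := exists_cycle_cover c hc
      exact hH w hw
    rw [hG.girth_eq_zero]
    exact Nat.zero_le _
  · obtain ⟨z, w, hw, hgirth⟩ := SimpleGraph.exists_girth_eq_length.2 hH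
    obtain ⟨x, c, hc, hlen⟩ := exists_cycle_le_of_cycle_cover G w hw
    have hle : G.egirth ≤ (c.length : ℕ∞) := by
      refine iInf_le_of_le x (iInf_le_of_le c (iInf_le_of_le hc le_rfl))
    have : G.girth ≤ c.length := by
      have := ENat.toNat_le_toNat hle (by simp)
      simpa [SimpleGraph.girth] using this
    omega
end

section
/- Every finite simple graph on n vertices in which every vertex has degree at least 3 contains a cycle of length at most 2⌊log₂ n⌋ + 2; equivalently, its girth is at most 2⌊log₂ n⌋ + 2. -/
section Aux

open SimpleGraph Walk

variable {V : Type} [DecidableEq V] {G : SimpleGraph V}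

lemma edist_add_edist_le_of_mem_support {x y a : V} (p : G.Walk x y) (ha : a ∈ p.support) :
    G.edist x a + G.edist a y ≤ p.length := by
  have h1 := G.edist_le (p.takeUntil a ha)
  have h2 := G.edist_le (p.dropUntil a ha)
  have h3 : (p.takeUntil a ha).length + (p.dropUntil a ha).length = p.length := by
    rw [← Walk.length_append, Walk.take_spec]
  calc G.edist x a + G.edist a y
      ≤ ((p.takeUntil a ha).length : ℕ∞) + ((p.dropUntil a ha).length : ℕ∞) :=
        add_le_add h1 h2
    _ = (p.length : ℕ∞) := by rw [← Nat.cast_add, h3]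

lemma even_cycle {v₀ u w1 w2 : V} (hne : w1 ≠ w2) (h1 : G.Adj u w1) (h2 : G.Adj u w2)
    (m : ℕ) (hw1 : G.edist v₀ w1 ≤ m) (hw2 : G.edist v₀ w2 ≤ m)
    (hu : (m : ℕ∞) < G.edist v₀ u) :
    ∃ (a : V) (c : G.Walk a a), c.IsCycle ∧ c.length ≤ 2 * m + 2 := by
  have ht1 : G.edist v₀ w1 ≠ ⊤ := fun h => by
    rw [h] at hw1; exact (lt_irrefl _ (lt_of_le_of_lt hw1 (ENat.coe_lt_top m))).elim
  have ht2 : G.edist v₀ w2 ≠ ⊤ := fun h => by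
    rw [h] at hw2; exact (lt_irrefl _ (lt_of_le_of_lt hw2 (ENat.coe_lt_top m))).elim
  obtain ⟨p1, hp1⟩ := G.exists_walk_of_edist_ne_top ht1
  obtain ⟨p2, hp2⟩ := G.exists_walk_of_edist_ne_top ht2
  have hl1 : (p1.length : ℕ∞) ≤ m := by rw [hp1]; exact hw1
  have hl2 : (p2.length : ℕ∞) ≤ m := by rw [hp2]; exact hw2
  set W : G.Walk w1 w2 := p1.reverse.append p2 with hW
  set R : G.Walk w1 w2 := W.bypass with hR
  have hRsup : ∀ a ∈ R.support, G.edist v₀ a ≤ m := by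
    intro a haR
    have haW : a ∈ W.support := W.support_bypass_subset haR
    rw [hW, Walk.mem_support_append_iff] at haW
    rcases haW with h | h
    · rw [Walk.support_reverse, List.mem_reverse] at h
      have := edist_add_edist_le_of_mem_support p1 h
      calc G.edist v₀ a ≤ G.edist v₀ a + G.edist a w1 := le_self_add
        _ ≤ (p1.length : ℕ∞) := this
        _ ≤ m := hl1
    · have := edist_add_edist_le_of_mem_support p2 h
      calc G.edist v₀ a ≤ G.edist v₀ a + G.edist a w2 := le_self_add
        _ ≤ (p2.length : ℕ∞) := this
        _ ≤ m := hl2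
  have huR : u ∉ R.support := fun h => absurd (hRsup u h) (not_le.mpr hu)
  set q : G.Walk w1 u := R.concat h2.symm with hq
  have hqpath : q.IsPath := by
    have h' : q.reverse.IsPath := by
      rw [hq, Walk.reverse_concat]
      exact (W.bypass_isPath.reverse).cons (by rwa [Walk.support_reverse, List.mem_reverse])
    have := h'.reverse
    rwa [Walk.reverse_reverse] at this
  have hedge : s(u, w1) ∉ q.edges := by
    rw [hq, Walk.edges_concat]; simp only [List.concat_eq_append, List.mem_append, List.mem_singleton]
    rintro (h | h)
    · exact huR (Walk.fst_mem_support_of_mem_edges R h)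
    · rw [Sym2.eq_iff] at h
      rcases h with ⟨h1', h2'⟩ | ⟨-, h2'⟩
      · exact G.ne_of_adj h2 h1'
      · exact hne h2'
  refine ⟨u, Walk.cons h1 q, (Walk.cons_isCycle_iff q h1).mpr ⟨hqpath, hedge⟩, ?_⟩
  have hRlen : R.length ≤ 2 * m := by
    have h3 : (W.length : ℕ∞) ≤ 2 * m := by
      rw [hW, Walk.length_append, Walk.length_reverse, Nat.cast_add, two_mul]
      exact add_le_add hl1 hl2
    have h4 : (R.length : ℕ∞) ≤ 2 * m := le_trans (Nat.cast_le.mpr W.length_bypass_le) h3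
    exact_mod_cast h4
  simp only [Walk.length_cons, hq, Walk.length_concat]
  omega

lemma odd_cycle {v₀ u w : V} (h : G.Adj u w) (k : ℕ)
    (hu : G.edist v₀ u = k) (hw : G.edist v₀ w = k) :
    ∃ (a : V) (c : G.Walk a a), c.IsCycle ∧ c.length ≤ 2 * k + 1 := by
  obtain ⟨pu, hpu⟩ := G.exists_walk_of_edist_eq_coe hu
  obtain ⟨pw, hpw⟩ := G.exists_walk_of_edist_eq_coe hw
  set W : G.Walk u w := pu.reverse.append pw with hW
  set R : G.Walk u w := W.bypass with hR
  have hedge : s(w, u) ∉ R.edges := by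
    intro hmem
    have hmem' : s(w, u) ∈ W.edges := W.edges_bypass_subset hmem
    rw [hW, Walk.edges_append, List.mem_append, Walk.edges_reverse, List.mem_reverse] at hmem'
    rcases hmem' with hm | hm
    · have hws : w ∈ pu.support := Walk.fst_mem_support_of_mem_edges pu hm
      have h5 := edist_add_edist_le_of_mem_support pu hws
      rw [hpu, hw] at h5
      have h6 : G.edist w u = 0 := by
        by_contra h7
        have : 1 ≤ G.edist w u := ENat.one_le_iff_ne_zero.mpr h7
        have : (k : ℕ∞) + 1 ≤ k := le_trans (add_le_add (le_refl _) this) h5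
        simp [ENat.add_one_le_iff] at this
      rw [edist_eq_zero_iff] at h6
      exact G.ne_of_adj h (h6.symm)
    · have hus : u ∈ pw.support := Walk.snd_mem_support_of_mem_edges pw hm
      have h5 := edist_add_edist_le_of_mem_support pw hus
      rw [hpw, hu] at h5
      have h6 : G.edist u w = 0 := by
        by_contra h7
        have : 1 ≤ G.edist u w := ENat.one_le_iff_ne_zero.mpr h7
        have : (k : ℕ∞) + 1 ≤ k := le_trans (add_le_add (le_refl _) this) h5
        simp [ENat.add_one_le_iff] at this
      rw [edist_eq_zero_iff] at h6
      exact G.ne_of_adj h h6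
  refine ⟨w, Walk.cons h.symm R, (Walk.cons_isCycle_iff R h.symm).mpr ⟨W.bypass_isPath, hedge⟩, ?_⟩
  have hlen : R.length ≤ 2 * k := by
    have hWl : W.length = pu.length + pw.length := by
      rw [hW, Walk.length_append, Walk.length_reverse]
    have h8 := W.length_bypass_le
    have h9 : R.length = W.bypass.length := by rw [hR]
    omega
  simp only [Walk.length_cons]
  omega

end Aux

/-- Every finite (nonempty) simple graph on `n` vertices in which every vertex
has degree at least 3 contains a cycle of length at most `2⌊log₂ n⌋ + 2`,
i.e. its girth is at most `2⌊log₂ n⌋ + 2`. Here `Nat.log 2 n = ⌊log₂ n⌋`. -/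
theorem girth_le_of_min_degree_three {V : Type} [Fintype V] [DecidableEq V] [Nonempty V]
    (G : SimpleGraph V) [DecidableRel G.Adj]
    (hdeg : ∀ v : V, 3 ≤ G.degree v) :
    G.girth ≤ (2 * Nat.log 2 (Fintype.card V) + 2 : ℕ) := by
  classical
  set n := Fintype.card V with hn
  set r := Nat.log 2 n with hrdef
  by_contra hcon
  push_neg at hcon
  have Hcyc : ∀ (a : V) (c : G.Walk a a), c.IsCycle → 2 * r + 2 < c.length := by
    intro a c hc
    by_contra hle
    push_neg at hle
    have hE : G.egirth ≤ (c.length : ℕ∞) := by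
      calc G.egirth ≤ ⨅ w : G.Walk a a, ⨅ _ : w.IsCycle, (w.length : ℕ∞) :=
            iInf_le _ a
        _ ≤ ⨅ _ : c.IsCycle, (c.length : ℕ∞) := iInf_le _ c
        _ ≤ _ := iInf_le _ hc
    have hg : G.girth ≤ c.length := by
      simpa [SimpleGraph.girth] using ENat.toNat_le_toNat hE (ENat.coe_ne_top _)
    omega
  set v₀ : V := Classical.arbitrary V with hv₀
  set S : ℕ → Finset V := fun k => Finset.univ.filter (fun u => G.edist v₀ u = (k : ℕ∞)) with hS
  have memS : ∀ (k : ℕ) (u : V), u ∈ S k ↔ G.edist v₀ u = (k : ℕ∞) := by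
    intro k u; simp [hS]
  -- base : S 1 has ≥ 3 elements
  have base : 3 ≤ (S 1).card := by
    have hsub : G.neighborFinset v₀ ⊆ S 1 := by
      intro w hw
      rw [SimpleGraph.mem_neighborFinset] at hw
      rw [memS]
      exact_mod_cast SimpleGraph.edist_eq_one_iff_adj.mpr hw
    exact le_trans (hdeg v₀) (Finset.card_le_card hsub)
  -- growth
  have growth : ∀ k : ℕ, 1 ≤ k → k ≤ r → 2 * (S k).card ≤ (S (k + 1)).card := by
    intro k hk1 hkr
    set F : V → Finset V := fun u => G.neighborFinset u ∩ S (k + 1) with hF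
    -- each F u has ≥ 2 elements
    have ha : ∀ u ∈ S k, 2 ≤ (F u).card := by
      intro u hu
      rw [memS] at hu
      -- the complement has ≤ 1 element
      have hsmall : (G.neighborFinset u \ S (k + 1)).card ≤ 1 := by
        rw [Finset.card_le_one]
        intro w1 hw1 w2 hw2
        by_contra hne
        -- each w in the complement has edist ≤ k - 1
        have hlow : ∀ w ∈ G.neighborFinset u \ S (k + 1), G.edist v₀ w ≤ (k - 1 : ℕ) := by
          intro w hw
          rw [Finset.mem_sdiff, SimpleGraph.mem_neighborFinset, memS] at hw
          obtain ⟨hadj, hnot⟩ := hw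
          have h1 : G.edist u w = 1 := SimpleGraph.edist_eq_one_iff_adj.mpr hadj
          have h2 : G.edist v₀ w ≤ ((k + 1 : ℕ) : ℕ∞) := by
            calc G.edist v₀ w ≤ G.edist v₀ u + G.edist u w := SimpleGraph.edist_triangle
              _ = ((k + 1 : ℕ) : ℕ∞) := by rw [hu, h1]; push_cast; ring
          have htop : G.edist v₀ w ≠ ⊤ := ne_top_of_le_ne_top (ENat.coe_ne_top _) h2
          lift G.edist v₀ w to ℕ using htop with j hj
          have hjk1 : j ≤ k + 1 := by exact_mod_cast h2
          have hjne : j ≠ k + 1 := by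
            intro h; exact hnot (by exact_mod_cast congrArg (Nat.cast : ℕ → ℕ∞) h)
          have hjnek : j ≠ k := by
            intro h
            subst h
            obtain ⟨a, c, hc, hlen⟩ := odd_cycle hadj j hu hj.symm
            have := Hcyc a c hc
            omega
          exact_mod_cast Nat.cast_le.mpr (by omega : j ≤ k - 1)
        have e1 := hlow w1 hw1
        have e2 := hlow w2 hw2
        have hadj1 : G.Adj u w1 := by
          have := (Finset.mem_sdiff.mp hw1).1; rwa [SimpleGraph.mem_neighborFinset] at this
        have hadj2 : G.Adj u w2 := by
          have := (Finset.mem_sdiff.mp hw2).1; rwa [SimpleGraph.mem_neighborFinset] at this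
        have hult : ((k - 1 : ℕ) : ℕ∞) < G.edist v₀ u := by
          rw [hu]; exact_mod_cast (show k - 1 < k by omega)
        obtain ⟨a, c, hc, hlen⟩ := even_cycle hne hadj1 hadj2 (k - 1) e1 e2 hult
        have := Hcyc a c hc
        omega
      have hsplit : (F u).card + (G.neighborFinset u \ S (k + 1)).card
          = (G.neighborFinset u).card := by
        rw [hF]
        exact Finset.card_inter_add_card_sdiff _ _
      have hdeg' := hdeg u
      rw [SimpleGraph.degree] at hdeg'
      omega
    -- disjointness
    have hdisj : ∀ u ∈ S k, ∀ u' ∈ S k, u ≠ u' → Disjoint (F u) (F u') := by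
      intro u hu u' hu' hne
      rw [Finset.disjoint_left]
      intro x hx hx'
      rw [hF] at hx hx'
      have hxS : x ∈ S (k + 1) := (Finset.mem_inter.mp hx).2
      rw [memS] at hxS hu hu'
      have hadj1 : G.Adj x u := ((Finset.mem_inter.mp hx).1 |> (SimpleGraph.mem_neighborFinset _ _ _).mp).symm
      have hadj2 : G.Adj x u' := ((Finset.mem_inter.mp hx').1 |> (SimpleGraph.mem_neighborFinset _ _ _).mp).symm
      have hult : ((k : ℕ) : ℕ∞) < G.edist v₀ x := by
        rw [hxS]; exact_mod_cast (show k < k + 1 by omega)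
      obtain ⟨a, c, hc, hlen⟩ := even_cycle hne hadj1 hadj2 k (le_of_eq hu) (le_of_eq hu') hult
      have := Hcyc a c hc
      omega
    have hsub : (S k).biUnion F ⊆ S (k + 1) := by
      refine Finset.biUnion_subset.mpr fun u _ => ?_
      rw [hF]
      exact Finset.inter_subset_right
    calc 2 * (S k).card = ∑ _u ∈ S k, 2 := by
          rw [Finset.sum_const, smul_eq_mul, mul_comm]
      _ ≤ ∑ u ∈ S k, (F u).card := Finset.sum_le_sum ha
      _ = ((S k).biUnion F).card := (Finset.card_biUnion hdisj).symm
      _ ≤ (S (k + 1)).card := Finset.card_le_card hsub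
  -- induction
  have key : ∀ k : ℕ, k ≤ r → 3 * 2 ^ k ≤ (S (k + 1)).card := by
    intro k
    induction k with
    | zero => intro _; simpa using base
    | succ k ih =>
      intro hk
      have h1 := ih (by omega)
      have h2 := growth (k + 1) (by omega) hk
      calc 3 * 2 ^ (k + 1) = 2 * (3 * 2 ^ k) := by ring
        _ ≤ 2 * (S (k + 1)).card := by omega
        _ ≤ (S (k + 2)).card := h2
  have hfin := key r le_rfl
  have hcard : (S (r + 1)).card ≤ n := by rw [hn]; exact Finset.card_le_univ _
  have hlt : n < 2 ^ (r + 1) := Nat.lt_pow_succ_log_self (by norm_num) n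
  have hpos : 0 < 2 ^ r := Nat.pow_pos (by norm_num)
  have : 2 ^ (r + 1) = 2 * 2 ^ r := by ring
  omega
end
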